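/- A finitely generated group in which finite-dimensional unitary representations separate points (i.e., a maximally almost periodic group) is residually finite. -/

import Mathlib

/-- A group is residually finite if homomorphisms to finite groups separate points. -/
def IsResiduallyFinite (G : Type*) [Group G] : Prop :=
  ∀ g : G, g ≠ 1 → ∃ (F : Type) (_ : Group F) (_ : Finite F) (f : G →* F), f g ≠ 1

/-- A group is maximally almost periodic if finite-dimensional unitary representations
separate points. -/
def IsMAP (G : Type*) [Group G] : Prop :=
  ∀ g : G, g ≠ 1 → ∃ (n : ℕ) (π : G →* Matrix.unitaryGroup (Fin n) ℂ), π g ≠ 1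


instance : IsJacobsonRing ℤ := by
  rw [isJacobsonRing_iff_prime_eq]
  intro P hP
  by_cases hbot : P = ⊥
  · subst hbot
    refine eq_bot_iff.mpr fun x hx => ?_
    rw [Ideal.jacobson, Ideal.mem_sInf] at hx
    by_contra hx0
    obtain ⟨p, hpgt, hp⟩ := Nat.exists_infinite_primes (x.natAbs + 1)
    have hm : (Ideal.span {(p : ℤ)}).IsMaximal :=
      PrincipalIdealRing.isMaximal_of_irreducible ((Nat.prime_iff_prime_int.mp hp)).irreducible
    have hmem := hx (show _ ∈ {J : Ideal ℤ | ⊥ ≤ J ∧ J.IsMaximal} from ⟨bot_le, hm⟩)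
    rw [Ideal.mem_span_singleton, Int.natCast_dvd] at hmem
    have := Nat.le_of_dvd (Int.natAbs_pos.mpr (by simpa using hx0)) hmem
    omega
  · exact Ideal.jacobson_eq_self_of_isMaximal (H := IsPrime.to_maximal_ideal hbot)

theorem lemA (K : Type*) [Field K] [Algebra.FiniteType ℤ K] : Finite K := by
  have hfin : Module.Finite ℤ K := finite_of_finite_type_of_isJacobsonRing ℤ K
  have hint : Algebra.IsIntegral ℤ K := Algebra.IsIntegral.of_finite ℤ K
  rcases CharP.char_is_prime_or_zero K (ringChar K) with hp | hp
  · haveI : Fact (Nat.Prime (ringChar K)) := ⟨hp⟩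
    haveI : Algebra (ZMod (ringChar K)) K := ZMod.algebra K (ringChar K)
    have : Module.Finite (ZMod (ringChar K)) K := Module.Finite.of_restrictScalars_finite ℤ _ _
    exact Module.finite_of_finite (ZMod (ringChar K))
  · haveI : CharP K 0 := hp ▸ ringChar.charP K
    haveI : CharZero K := CharP.charP_to_charZero K
    exfalso
    haveI : IsScalarTower ℤ ℚ K := IsScalarTower.of_algebraMap_eq' (by ext n; simp)
    have h2 : IsIntegral ℤ ((algebraMap ℚ K) (1/2 : ℚ)) := hint.isIntegral _
    have h3 : IsIntegral ℤ (1/2 : ℚ) := h2.tower_bot (algebraMap ℚ K).injective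
    obtain ⟨y, hy⟩ := IsIntegrallyClosed.isIntegral_iff.mp h3
    have hy' : (y : ℚ) = 1/2 := by simpa using hy
    have : (2 * y : ℤ) = 1 := by exact_mod_cast (by push_cast [hy']; ring : ((2*y : ℤ) : ℚ) = 1)
    omega


theorem lemB (A : Type) [CommRing A] [IsDomain A] [Algebra ℤ A] [Algebra.FiniteType ℤ A]
    (c : A) (hc : c ≠ 0) :
    ∃ (K : Type) (_ : CommRing K) (_ : Finite K) (φ : A →+* K), φ c ≠ 0 := by
  haveI : IsJacobsonRing A := isJacobsonRing_of_finiteType (A := ℤ) (B := A)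
  have hjac : (⊥ : Ideal A).jacobson = ⊥ :=
    (inferInstance : IsJacobsonRing A).out Ideal.bot_prime.isRadical
  have hcnot : c ∉ (⊥ : Ideal A).jacobson := by rw [hjac]; simpa using hc
  rw [Ideal.jacobson] at hcnot
  simp only [Ideal.mem_sInf, not_forall] at hcnot
  obtain ⟨m, hmset, hcm⟩ := hcnot
  haveI hmmax : m.IsMaximal := hmset.2
  letI : Field (A ⧸ m) := Ideal.Quotient.field m
  have hft : @Algebra.FiniteType ℤ (A ⧸ m) _ _ (Ideal.Quotient.algebra ℤ) :=
    Algebra.FiniteType.of_surjective (Ideal.Quotient.mkₐ ℤ m)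
      (Ideal.Quotient.mkₐ_surjective ℤ m)
  have heq : (Ideal.Quotient.algebra ℤ : Algebra ℤ (A ⧸ m)) = Ring.toIntAlgebra _ :=
    Subsingleton.elim _ _
  haveI : Finite (A ⧸ m) := @lemA (A ⧸ m) _ (heq ▸ hft)
  exact ⟨A ⧸ m, inferInstance, inferInstance, Ideal.Quotient.mk m, by
    rwa [Ne, Ideal.Quotient.eq_zero_iff_mem]⟩

set_option maxHeartbeats 1000000 in
set_option synthInstance.maxHeartbeats 200000 in
theorem fg_map_implies_rf' (G : Type*) [Group G] (hfg : Group.FG G)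
    (hmap : ∀ g : G, g ≠ 1 → ∃ (n : ℕ) (π : G →* Matrix.unitaryGroup (Fin n) ℂ), π g ≠ 1) :
    ∀ g : G, g ≠ 1 → ∃ (F : Type) (_ : Group F) (_ : Finite F) (f : G →* F), f g ≠ 1 := by
  intro g hg
  obtain ⟨n, π, hπ⟩ := hmap g hg
  obtain ⟨S, hS⟩ := hfg.1
  -- the set of entries of generators and inverse generators
  set T : Set ℂ := (fun q : G × Fin n × Fin n => ((π q.1 : Matrix.unitaryGroup (Fin n) ℂ) :
      Matrix (Fin n) (Fin n) ℂ) q.2.1 q.2.2) '' (((S : Set G) ∪ (S : Set G)⁻¹) ×ˢ Set.univ)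
      with hT
  have hTfin : T.Finite :=
    Set.Finite.image _ ((S.finite_toSet.union S.finite_toSet.inv).prod (Set.finite_univ))
  set A : Subalgebra ℤ ℂ := Algebra.adjoin ℤ T with hA
  -- all entries of all π h lie in A
  have key : ∀ h : G, ∀ i j, ((π h : Matrix.unitaryGroup (Fin n) ℂ) :
      Matrix (Fin n) (Fin n) ℂ) i j ∈ A := by
    have main : ∀ h : G, (∀ i j, ((π h : Matrix.unitaryGroup (Fin n) ℂ) :
        Matrix (Fin n) (Fin n) ℂ) i j ∈ A) ∧ (∀ i j, ((π h⁻¹ : Matrix.unitaryGroup (Fin n) ℂ) :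
        Matrix (Fin n) (Fin n) ℂ) i j ∈ A) := by
      intro h
      have hmem : h ∈ Subgroup.closure (S : Set G) := hS ▸ Subgroup.mem_top h
      induction hmem using Subgroup.closure_induction with
      | mem s hs =>
        constructor
        · intro i j
          exact Algebra.subset_adjoin ⟨⟨s, i, j⟩, ⟨Or.inl hs, Set.mem_univ _⟩, rfl⟩
        · intro i j
          exact Algebra.subset_adjoin ⟨⟨s⁻¹, i, j⟩, ⟨Or.inr (by simpa using hs), Set.mem_univ _⟩,
            rfl⟩
      | one =>
        have h1 : ((π (1 : G) : Matrix.unitaryGroup (Fin n) ℂ) :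
            Matrix (Fin n) (Fin n) ℂ) = 1 := by rw [map_one]; rfl
        refine ⟨?_, ?_⟩ <;> intro i j <;> simp only [inv_one, h1, Matrix.one_apply] <;>
          split
        all_goals first | exact A.one_mem | exact A.zero_mem
      | mul a b ha hb iha ihb =>
        have hmul : ∀ x y : G, ∀ i j, (∀ i j, ((π x : Matrix.unitaryGroup (Fin n) ℂ) :
            Matrix (Fin n) (Fin n) ℂ) i j ∈ A) → (∀ i j, ((π y : Matrix.unitaryGroup (Fin n) ℂ) :
            Matrix (Fin n) (Fin n) ℂ) i j ∈ A) →
            ((π (x*y) : Matrix.unitaryGroup (Fin n) ℂ) : Matrix (Fin n) (Fin n) ℂ) i j ∈ A := by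
          intro x y i j hx hy
          have : ((π (x*y) : Matrix.unitaryGroup (Fin n) ℂ) : Matrix (Fin n) (Fin n) ℂ)
              = ((π x : Matrix.unitaryGroup (Fin n) ℂ) : Matrix (Fin n) (Fin n) ℂ) *
                ((π y : Matrix.unitaryGroup (Fin n) ℂ) : Matrix (Fin n) (Fin n) ℂ) := by
            rw [map_mul]; rfl
          rw [this, Matrix.mul_apply]
          exact Subalgebra.sum_mem A fun k _ => Subalgebra.mul_mem A (hx i k) (hy k j)
        exact ⟨fun i j => hmul a b i j iha.1 ihb.1,
          fun i j => by rw [mul_inv_rev]; exact hmul b⁻¹ a⁻¹ i j ihb.2 iha.2⟩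
      | inv a ha iha =>
        exact ⟨iha.2, by simpa [inv_inv] using iha.1⟩
    exact fun h => (main h).1
  -- the representation with entries in A
  let e : G →* Matrix (Fin n) (Fin n) A :=
    { toFun := fun h => fun i j => ⟨((π h : Matrix.unitaryGroup (Fin n) ℂ) :
        Matrix (Fin n) (Fin n) ℂ) i j, key h i j⟩
      map_one' := by
        ext i j
        show ((π (1 : G) : Matrix.unitaryGroup (Fin n) ℂ) : Matrix (Fin n) (Fin n) ℂ) i j
          = ((1 : Matrix (Fin n) (Fin n) A) i j : ℂ)
        rw [map_one]
        show (1 : Matrix (Fin n) (Fin n) ℂ) i j = _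
        simp [Matrix.one_apply]
        split <;> simp
      map_mul' := by
        intro a b
        refine Matrix.ext fun i j => Subtype.ext ?_
        show ((π (a*b) : Matrix.unitaryGroup (Fin n) ℂ) : Matrix (Fin n) (Fin n) ℂ) i j = _
        rw [map_mul]
        simp [Matrix.mul_apply]
        erw [Matrix.mul_apply]
        simp
      }
  -- entry where π g differs from the identity
  have hne : ((π g : Matrix.unitaryGroup (Fin n) ℂ) : Matrix (Fin n) (Fin n) ℂ)
      ≠ (1 : Matrix (Fin n) (Fin n) ℂ) := fun h => hπ (Subtype.ext h)
  obtain ⟨i, hi⟩ := Function.ne_iff.mp hne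
  obtain ⟨j, hij⟩ := Function.ne_iff.mp hi
  have hone : ∀ i j : Fin n, (((1 : Matrix (Fin n) (Fin n) A) i j : A) : ℂ)
      = (1 : Matrix (Fin n) (Fin n) ℂ) i j := by
    intro i j
    simp only [Matrix.one_apply]
    split <;> simp
  set c : A := e g i j - (1 : Matrix (Fin n) (Fin n) A) i j with hc
  have hc0 : c ≠ 0 := by
    intro h
    apply hij
    have := congrArg (fun x : A => (x : ℂ)) h
    simp only [hc] at this
    push_cast at this
    rw [hone i j] at this
    have heg : ((e g i j : A) : ℂ)
        = ((π g : Matrix.unitaryGroup (Fin n) ℂ) : Matrix (Fin n) (Fin n) ℂ) i j := rfl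
    rw [heg] at this
    linear_combination this
  haveI hAft : Algebra.FiniteType ℤ A :=
    (Subalgebra.fg_iff_finiteType A).mp (Subalgebra.fg_def.mpr ⟨T, hTfin, rfl⟩)
  obtain ⟨K, _, _, φ, hφ⟩ := lemB A c hc0
  refine ⟨(Matrix (Fin n) (Fin n) K)ˣ, inferInstance, inferInstance,
    (Units.map (φ.mapMatrix.toMonoidHom)).comp e.toHomUnits, ?_⟩
  intro hone1
  have h1 : φ.mapMatrix (e g) = 1 := by
    have := congrArg (Units.val) hone1
    simpa using this
  have h2 : φ (e g i j) = (1 : Matrix (Fin n) (Fin n) K) i j := by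
    have := congrFun (congrFun (congrArg (fun M => (M : Matrix (Fin n) (Fin n) K)) h1) i) j
    simpa [RingHom.mapMatrix_apply, Matrix.map_apply] using this
  have h3 : (1 : Matrix (Fin n) (Fin n) K) i j = φ ((1 : Matrix (Fin n) (Fin n) A) i j) := by
    simp only [Matrix.one_apply]
    split <;> simp
  apply hφ
  rw [hc, RingHom.map_sub, h2, h3]
  ring

/-- A finitely generated maximally almost periodic group is residually finite. -/
theorem fg_map_implies_rf (G : Type*) [Group G] (hfg : Group.FG G) (hmap : IsMAP G) :
    IsResiduallyFinite G :=
  fun g hg => fg_map_implies_rf' G hfg hmap g hg
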